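/- Let q be a prime power and f(x) = x^n + a x^s + b ∈ F_q[x] with a, b ≠ 0, n > s > 0, and gcd(n, s, q-1) = 1. Then the number of distinct roots of f in F_q is at most 1/2 + √(q-1); equivalently, if r is the number of distinct roots then r^2 - r + 1 ≤ q - 1. -/

import Mathlib

open Polynomial

private lemma auxA (F : Type*) [Field F] [Fintype F] {n s : ℕ}
    (hgcd : Nat.gcd n (Nat.gcd s (Fintype.card F - 1)) = 1)
    {w : F} (hw : w ≠ 0) (h1 : w ^ n = 1) (h2 : w ^ s = 1) : w = 1 := by
  have h3 : w ^ (Fintype.card F - 1) = 1 := FiniteField.pow_card_sub_one_eq_one w hw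
  have hd : orderOf w ∣ 1 := by
    rw [← hgcd]
    exact Nat.dvd_gcd (orderOf_dvd_of_pow_eq_one h1)
      (Nat.dvd_gcd (orderOf_dvd_of_pow_eq_one h2) (orderOf_dvd_of_pow_eq_one h3))
  exact orderOf_eq_one_iff.mp (Nat.dvd_one.mp hd)

private lemma auxNZ {F : Type*} [Field F] {n s : ℕ} {a b x : F}
    (hb : b ≠ 0) (hs : 0 < s) (hsn : s < n)
    (e : x ^ n + a * x ^ s + b = 0) : x ≠ 0 := by
  intro h
  subst h
  rw [zero_pow (by omega : n ≠ 0), zero_pow (by omega : s ≠ 0)] at e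
  simp at e
  exact hb e

private lemma auxKey (F : Type*) [Field F] [Fintype F] {n s : ℕ} {a b : F}
    (ha : a ≠ 0) (hb : b ≠ 0) (hs : 0 < s) (hsn : s < n)
    (hgcd : Nat.gcd n (Nat.gcd s (Fintype.card F - 1)) = 1)
    {x y x' y' : F} (hxy : x ≠ y)
    (e1 : x ^ n + a * x ^ s + b = 0) (e2 : y ^ n + a * y ^ s + b = 0)
    (e3 : x' ^ n + a * x' ^ s + b = 0) (e4 : y' ^ n + a * y' ^ s + b = 0)
    (hu : y / x = y' / x') : x = x' := by
  have hx : x ≠ 0 := auxNZ hb hs hsn e1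
  have hy : y ≠ 0 := auxNZ hb hs hsn e2
  have hx' : x' ≠ 0 := auxNZ hb hs hsn e3
  have hy' : y' ≠ 0 := auxNZ hb hs hsn e4
  set u := y / x with hudef
  have hyu : y = u * x := by rw [hudef]; field_simp
  have hy'u : y' = u * x' := by rw [hu]; field_simp
  have hu0 : u ≠ 0 := div_ne_zero hy hx
  have hu1 : u ≠ 1 := by
    intro h
    rw [h, one_mul] at hyu
    exact hxy hyu.symm
  rw [hyu, mul_pow, mul_pow] at e2
  rw [hy'u, mul_pow, mul_pow] at e4
  have h5 : x ^ n * (u ^ n - 1) + a * x ^ s * (u ^ s - 1) = 0 := by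
    linear_combination e2 - e1
  have h5' : x' ^ n * (u ^ n - 1) + a * x' ^ s * (u ^ s - 1) = 0 := by
    linear_combination e4 - e3
  have hun : u ^ n ≠ 1 := by
    intro h
    have h6 : a * x ^ s * (u ^ s - 1) = 0 := by linear_combination h5 - x ^ n * h
    have hus : u ^ s = 1 := by
      rcases mul_eq_zero.mp h6 with h7 | h7
      · exact absurd h7 (mul_ne_zero ha (pow_ne_zero s hx))
      · exact sub_eq_zero.mp h7
    exact hu1 (auxA F hgcd hu0 h hus)
  have hun' : u ^ n - 1 ≠ 0 := sub_ne_zero.mpr hun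
  have hsplit : x ^ (n - s) * x ^ s = x ^ n := by
    rw [← pow_add, Nat.sub_add_cancel hsn.le]
  have hsplit' : x' ^ (n - s) * x' ^ s = x' ^ n := by
    rw [← pow_add, Nat.sub_add_cancel hsn.le]
  have h6 : x ^ (n - s) * (u ^ n - 1) = -(a * (u ^ s - 1)) :=
    mul_right_cancel₀ (pow_ne_zero s hx)
      (by linear_combination (u ^ n - 1) * hsplit + h5)
  have h6' : x' ^ (n - s) * (u ^ n - 1) = -(a * (u ^ s - 1)) :=
    mul_right_cancel₀ (pow_ne_zero s hx')
      (by linear_combination (u ^ n - 1) * hsplit' + h5')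
  have h7 : x ^ (n - s) = x' ^ (n - s) := mul_right_cancel₀ hun' (h6.trans h6'.symm)
  have h8 : x ^ s * (x ^ (n - s) + a) = -b := by linear_combination e1 + hsplit
  have h8' : x' ^ s * (x ^ (n - s) + a) = -b := by
    rw [h7]; linear_combination e3 + hsplit'
  have hc : x ^ (n - s) + a ≠ 0 := by
    intro h
    rw [h, mul_zero] at h8
    exact hb (neg_eq_zero.mp h8.symm)
  have h9 : x ^ s = x' ^ s := mul_right_cancel₀ hc (h8.trans h8'.symm)
  have hws : (x / x') ^ s = 1 := by
    rw [div_pow, h9, div_self (pow_ne_zero s hx')]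
  have hwns : (x / x') ^ (n - s) = 1 := by
    rw [div_pow, h7, div_self (pow_ne_zero (n - s) hx')]
  have hwn : (x / x') ^ n = 1 := by
    rw [show n = (n - s) + s by omega, pow_add, hwns, hws, one_mul]
  have hw1 : x / x' = 1 := auxA F hgcd (div_ne_zero hx hx') hwn hws
  exact (div_eq_one_iff_eq hx').mp hw1

theorem stmt5 (F : Type*) [Field F] [Fintype F] [DecidableEq F]
    (n s : ℕ) (a b : F) (ha : a ≠ 0) (hb : b ≠ 0) (hs : 0 < s) (hsn : s < n)
    (hgcd : Nat.gcd n (Nat.gcd s (Fintype.card F - 1)) = 1)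
    (r : ℕ) (hr : r = (X ^ n + C a * X ^ s + C b : F[X]).roots.toFinset.card) :
    (r : ℝ) ≤ 1 / 2 + Real.sqrt ((Fintype.card F - 1 : ℕ) : ℝ) ∧
      r ^ 2 - r + 1 ≤ Fintype.card F - 1 := by
  classical
  set q := Fintype.card F with hq
  have hq2 : 2 ≤ q := Fintype.one_lt_card
  set S := (X ^ n + C a * X ^ s + C b : F[X]).roots.toFinset with hS
  have hroot : ∀ x ∈ S, x ^ n + a * x ^ s + b = 0 := by
    intro x hx
    have h := isRoot_of_mem_roots (Multiset.mem_toFinset.mp hx)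
    simpa [IsRoot] using h
  have hmain : r * r - r ≤ q - 2 := by
    have hT : ((Finset.univ : Finset F) \ {0, 1}).card = q - 2 := by
      rw [Finset.card_sdiff_of_subset (Finset.subset_univ _), Finset.card_univ,
        Finset.card_pair (zero_ne_one)]
    have hle : S.offDiag.card ≤ ((Finset.univ : Finset F) \ {0, 1}).card := by
      apply Finset.card_le_card_of_injOn (fun p : F × F => p.2 / p.1)
      · intro p hp
        obtain ⟨h1, h2, h12⟩ := Finset.mem_offDiag.mp hp
        have hp1 : p.1 ≠ 0 := auxNZ hb hs hsn (hroot _ h1)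
        have hp2 : p.2 ≠ 0 := auxNZ hb hs hsn (hroot _ h2)
        rw [Finset.mem_coe, Finset.mem_sdiff]
        refine ⟨Finset.mem_univ _, ?_⟩
        simp only [Finset.mem_insert, Finset.mem_singleton, not_or]
        exact ⟨div_ne_zero hp2 hp1, fun h => h12 ((div_eq_one_iff_eq hp1).mp h).symm⟩
      · intro p hp p' hp' heq
        have heq2 : p.2 / p.1 = p'.2 / p'.1 := heq
        simp only [Finset.mem_coe] at hp hp'
        obtain ⟨h1, h2, h12⟩ := Finset.mem_offDiag.mp hp
        obtain ⟨h1', h2', h12'⟩ := Finset.mem_offDiag.mp hp'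
        have hx1 : p.1 = p'.1 :=
          auxKey F ha hb hs hsn hgcd h12 (hroot _ h1) (hroot _ h2)
            (hroot _ h1') (hroot _ h2') heq2
        have hp1 : p.1 ≠ 0 := auxNZ hb hs hsn (hroot _ h1)
        have hx2 : p.2 = p'.2 := by
          rw [← hx1] at heq2
          exact div_left_inj' hp1 |>.mp heq2
        exact Prod.ext hx1 hx2
    rw [Finset.offDiag_card, hT, ← hr] at hle
    exact hle
  have hsecond : r ^ 2 - r + 1 ≤ q - 1 := by
    rw [pow_two]
    omega
  refine ⟨?_, hsecond⟩
  rcases Nat.eq_zero_or_pos r with h0 | hpos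
  · rw [h0]
    push_cast
    positivity
  · have hr2 : r ≤ r * r := Nat.le_mul_of_pos_left r hpos
    have h2 : r * r - r + 1 ≤ q - 1 := by omega
    have hcast : (r : ℝ) * r - r + 1 ≤ ((q - 1 : ℕ) : ℝ) := by
      have h3 := (Nat.cast_le (α := ℝ)).mpr h2
      push_cast [Nat.cast_sub hr2] at h3
      linarith
    have hnn : (0 : ℝ) ≤ ((q - 1 : ℕ) : ℝ) := Nat.cast_nonneg _
    have hsq := Real.sq_sqrt hnn
    have hsn2 := Real.sqrt_nonneg ((q - 1 : ℕ) : ℝ)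
    have hr1 : (1 : ℝ) ≤ r := by exact_mod_cast hpos
    nlinarith [hsq, hsn2, hcast, hr1]
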